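/- Let F be a free group of rank μ > 1 with generators x, y, and let F̂ be its Q-closure. Consider u ∈ H_1(F̂; Z[H_1(F̂;Q)]) = F̂^(1)/[F̂^(1), F̂^(1)] represented by xyx^{-1}y^{-1}, and s = [x] - 1 ∈ Z[H_1(F̂;Q)]. Then there is no v ∈ H_1(F̂; Z[H_1(F̂;Q)]) with s·v = u. Consequently, the canonical map H_1(F̂; Z[H_1(F̂;Q)]) → H_1(F̂; K(H_1(F̂;Q))) into the Ore localization is not surjective. -/

import Mathlib

open scoped TensorProduct
open scoped commutatorElement

/-- The set of denominators of (reduced fractional expressions of) elements of `R ⊆ ℚ`. -/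
def DR (R : Subring ℚ) : Set ℕ := {d | ∃ q ∈ R, q.den = d}

variable {G H A : Type*} [Group G] [Group H] [Group A]

/-- Evaluation of a monomial over `G` in `n` indeterminates at a tuple of elements of `G`. -/
noncomputable def evalWord {n : ℕ} (g : Fin n → G) :
    Monoid.Coprod G (FreeGroup (Fin n)) →* G :=
  Monoid.Coprod.lift (MonoidHom.id G) (FreeGroup.lift g)

/-- The projection `G * F → F → F/[F,F]`. -/
noncomputable def toFreeAb (G : Type*) [Group G] (n : ℕ) :
    Monoid.Coprod G (FreeGroup (Fin n)) →* Abelianization (FreeGroup (Fin n)) :=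
  Monoid.Coprod.lift 1 Abelianization.of

/-- An `R`-nullhomologous system of equations `xᵢ^e = wᵢ(x₁,…,xₙ)` over `G`. -/
structure NullSys (R : Subring ℚ) (G : Type*) [Group G] where
  n : ℕ
  e : ℕ
  he : e ∈ DR R
  w : Fin n → Monoid.Coprod G (FreeGroup (Fin n))
  nullh : ∀ i, toFreeAb G n (w i) = 1

/-- A solution of a system of equations over `G`. -/
def NullSys.IsSolution {R : Subring ℚ} (S : NullSys R G) (g : Fin S.n → G) : Prop :=
  ∀ i, (g i) ^ S.e = evalWord g (S.w i)

/-- A group is `R`-closed if every `R`-nullhomologous system over it has a unique solution. -/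
def IsRClosed (R : Subring ℚ) (A : Type*) [Group A] : Prop :=
  ∀ S : NullSys R A, ∃! g : Fin S.n → A, S.IsSolution g

/-- A normal subgroup `N ≤ G` is `R`-invisible if it is normally finitely generated and every
element of `N/[G,N]` has (finite) order lying in `D_R`. -/
def IsRInvisible (R : Subring ℚ) {G : Type*} [Group G] (N : Subgroup G) : Prop :=
  N.Normal ∧
  (∃ s : Finset G, ↑s ⊆ (N : Set G) ∧ Subgroup.normalClosure ↑s = N) ∧
  ∀ x ∈ N, ∃ e ∈ DR R, x ^ e ∈ ⁅(⊤ : Subgroup G), N⁆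

universe u

/-- An `R`-closure of `G`: a homomorphism into an `R`-closed group, initial among homomorphisms
of `G` into `R`-closed groups. -/
def IsRClosure (R : Subring ℚ) {G Ghat : Type u} [Group G] [Group Ghat] (c : G →* Ghat) : Prop :=
  IsRClosed R Ghat ∧
    ∀ (A : Type u) (_ : Group A), IsRClosed R A →
      ∀ φ : G →* A, ∃! ψ : Ghat →* A, ψ.comp c = φ

/-- The conjugation action of `g : A` on the abelianization of a normal subgroup `C ≤ A`. -/
noncomputable def conjAbel {A : Type*} [Group A] (C : Subgroup A) [C.Normal] (g : A) :
    Abelianization ↥C →* Abelianization ↥C :=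
  Abelianization.map (MulAut.conjNormal g).toMonoidHom

/-- The action of an element `p` of the group ring `ℤ[A/C]` on the abelianization of a normal
subgroup `C ≤ A` (written multiplicatively), induced by conjugation. -/
noncomputable def pAct {A : Type*} [Group A] (C : Subgroup A) [C.Normal]
    (p : (A ⧸ C) →₀ ℤ) (m : Abelianization ↥C) : Abelianization ↥C :=
  p.prod fun q c => (conjAbel C q.out m) ^ c

namespace NotDivAux

/-- The rational Heisenberg group (universe-polymorphic). -/
structure Hei : Type u where
  a : ℚ
  b : ℚ
  c : ℚ

namespace Hei

@[ext] theorem ext' {p q : Hei.{u}} (ha : p.a = q.a) (hb : p.b = q.b) (hc : p.c = q.c) :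
    p = q := by cases p; cases q; simp_all

instance : Mul Hei.{u} := ⟨fun p q => ⟨p.a + q.a, p.b + q.b, p.c + q.c + p.a * q.b⟩⟩
instance : One Hei.{u} := ⟨⟨0, 0, 0⟩⟩
instance : Inv Hei.{u} := ⟨fun p => ⟨-p.a, -p.b, p.a * p.b - p.c⟩⟩

@[simp] theorem mul_a (p q : Hei.{u}) : (p * q).a = p.a + q.a := rfl
@[simp] theorem mul_b (p q : Hei.{u}) : (p * q).b = p.b + q.b := rfl
@[simp] theorem mul_c (p q : Hei.{u}) : (p * q).c = p.c + q.c + p.a * q.b := rfl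
@[simp] theorem one_a : (1 : Hei.{u}).a = 0 := rfl
@[simp] theorem one_b : (1 : Hei.{u}).b = 0 := rfl
@[simp] theorem one_c : (1 : Hei.{u}).c = 0 := rfl
@[simp] theorem inv_a (p : Hei.{u}) : (p⁻¹).a = -p.a := rfl
@[simp] theorem inv_b (p : Hei.{u}) : (p⁻¹).b = -p.b := rfl
@[simp] theorem inv_c (p : Hei.{u}) : (p⁻¹).c = p.a * p.b - p.c := rfl

instance : Group Hei.{u} where
  mul_assoc p q r := by ext <;> simp <;> ring
  one_mul p := by ext <;> simp
  mul_one p := by ext <;> simp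
  inv_mul_cancel p := by ext <;> simp <;> ring

theorem central {z : Hei.{u}} (hza : z.a = 0) (hzb : z.b = 0) (q : Hei.{u}) :
    z * q = q * z := by ext <;> simp [hza, hzb] <;> ring

theorem pow_coords (p : Hei.{u}) : ∀ m : ℕ, p ^ m =
    ⟨m * p.a, m * p.b, m * p.c + ((m : ℚ) * ((m : ℚ) - 1) / 2) * p.a * p.b⟩
  | 0 => by ext <;> simp
  | (m + 1) => by
      rw [pow_succ, pow_coords p m]
      ext <;> simp <;> push_cast <;> ring

/-- First coordinate, as a homomorphism to `Multiplicative ℚ`. -/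
def πa : Hei.{u} →* Multiplicative ℚ where
  toFun p := Multiplicative.ofAdd p.a
  map_one' := rfl
  map_mul' _ _ := rfl

/-- Second coordinate, as a homomorphism to `Multiplicative ℚ`. -/
def πb : Hei.{u} →* Multiplicative ℚ where
  toFun p := Multiplicative.ofAdd p.b
  map_one' := rfl
  map_mul' _ _ := rfl

/-- The central embedding of `ℚ` as the third coordinate. -/
def δ : Multiplicative ℚ →* Hei.{u} where
  toFun t := ⟨0, 0, t.toAdd⟩
  map_one' := rfl
  map_mul' s t := by ext <;> simp

/-- Multiplying a homomorphism by a centrally-valued homomorphism gives a homomorphism. -/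
def mulCentral {K : Type*} [Monoid K] (f h : K →* Hei.{u})
    (hc : ∀ k, (h k).a = 0 ∧ (h k).b = 0) : K →* Hei.{u} where
  toFun k := f k * h k
  map_one' := by simp
  map_mul' u v := by
    have hsw : h u * f v = f v * h u := central (hc u).1 (hc u).2 (f v)
    show f (u * v) * h (u * v) = f u * h u * (f v * h v)
    rw [map_mul, map_mul, mul_assoc, ← mul_assoc (f v), ← hsw, mul_assoc, ← mul_assoc, ← mul_assoc]

@[simp] theorem mulCentral_apply {K : Type*} [Monoid K] (f h : K →* Hei.{u}) (hc) (k : K) :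
    mulCentral f h hc k = f k * h k := rfl

end Hei

end NotDivAux

namespace NotDivAux

/-- Projections of the value of a null-homologous word do not depend on the arguments. -/
theorem eval_proj {n : ℕ} (π : Hei.{u} →* Multiplicative ℚ) (g : Fin n → Hei.{u})
    {w : Monoid.Coprod Hei.{u} (FreeGroup (Fin n))} (hw : toFreeAb Hei.{u} n w = 1) :
    π (evalWord g w) = Monoid.Coprod.lift π 1 w := by
  have key : π.comp (evalWord g) =
      (Monoid.Coprod.lift π 1) *
        ((Abelianization.lift (FreeGroup.lift fun i => π (g i))).comp (toFreeAb Hei.{u} n)) := by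
    apply Monoid.Coprod.hom_ext
    · apply MonoidHom.ext; intro h
      simp [evalWord, toFreeAb, Monoid.Coprod.lift_apply_inl]
    · refine FreeGroup.ext_hom _ _ fun i => ?_
      simp [evalWord, toFreeAb, Monoid.Coprod.lift_apply_inr]
  have h2 := DFunLike.congr_fun key w
  simpa [hw] using h2

/-- The value of a null-homologous word depends only on the projections of the arguments. -/
theorem eval_eq_of_proj_eq {n : ℕ} (g g' : Fin n → Hei.{u})
    (ha : ∀ i, (g' i).a = (g i).a) (hb : ∀ i, (g' i).b = (g i).b)
    {w : Monoid.Coprod Hei.{u} (FreeGroup (Fin n))} (hw : toFreeAb Hei.{u} n w = 1) :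
    evalWord g' w = evalWord g w := by
  set m : FreeGroup (Fin n) →* Multiplicative ℚ :=
    FreeGroup.lift (fun i => Multiplicative.ofAdd ((g' i).c - (g i).c)) with hm
  set ζ : Monoid.Coprod Hei.{u} (FreeGroup (Fin n)) →* Hei.{u} :=
    Hei.δ.comp ((Abelianization.lift m).comp (toFreeAb Hei.{u} n)) with hζ
  have hζc : ∀ v, (ζ v).a = 0 ∧ (ζ v).b = 0 := fun v => ⟨rfl, rfl⟩
  have key : evalWord g' = Hei.mulCentral (evalWord g) ζ hζc := by
    apply Monoid.Coprod.hom_ext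
    · apply MonoidHom.ext; intro h
      show evalWord g' (Monoid.Coprod.inl h) =
        evalWord g (Monoid.Coprod.inl h) * ζ (Monoid.Coprod.inl h)
      simp [evalWord, hζ, toFreeAb, Monoid.Coprod.lift_apply_inl]
    · refine FreeGroup.ext_hom _ _ fun i => ?_
      show evalWord g' (Monoid.Coprod.inr (FreeGroup.of i)) =
        evalWord g (Monoid.Coprod.inr (FreeGroup.of i)) * ζ (Monoid.Coprod.inr (FreeGroup.of i))
      have hz : ζ (Monoid.Coprod.inr (FreeGroup.of i)) =
          ⟨0, 0, (g' i).c - (g i).c⟩ := by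
        simp [hζ, toFreeAb, Monoid.Coprod.lift_apply_inr, hm, Hei.δ]
      rw [hz]
      show FreeGroup.lift g' (FreeGroup.of i) = FreeGroup.lift g (FreeGroup.of i) * _
      rw [FreeGroup.lift_apply_of, FreeGroup.lift_apply_of]
      ext <;> simp [ha i, hb i]
  have hz1 : ζ w = 1 := by simp [hζ, hw]
  rw [key, Hei.mulCentral_apply, hz1, mul_one]

theorem prod_zpow_eq {β : Type*} [CommGroup β] {ι : Type*} (s : Finset ι) (f : ι → ℤ) (a : β) :
    (∏ i ∈ s, a ^ f i) = a ^ (∑ i ∈ s, f i) := by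
  classical
  induction s using Finset.induction_on with
  | empty => simp
  | insert _ _ h ih => rw [Finset.prod_insert h, Finset.sum_insert h, ih, ← zpow_add]

end NotDivAux

namespace NotDivAux

theorem hei_closed : IsRClosed (⊤ : Subring ℚ) Hei.{u} := by
  intro S
  have he0 : (S.e : ℚ) ≠ 0 := by
    obtain ⟨q, -, hq⟩ := S.he
    exact_mod_cast fun h => q.den_nz (hq ▸ Nat.cast_injective h)
  set Ca : Fin S.n → ℚ :=
    fun i => Multiplicative.toAdd (Monoid.Coprod.lift Hei.πa 1 (S.w i)) with hCa
  set Cb : Fin S.n → ℚ :=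
    fun i => Multiplicative.toAdd (Monoid.Coprod.lift Hei.πb 1 (S.w i)) with hCb
  set aa : Fin S.n → ℚ := fun i => Ca i / S.e with haa
  set bb : Fin S.n → ℚ := fun i => Cb i / S.e with hbb
  set g₀ : Fin S.n → Hei.{u} := fun i => ⟨aa i, bb i, 0⟩ with hg₀
  set T : Fin S.n → ℚ := fun i => (evalWord g₀ (S.w i)).c with hT
  set gg : Fin S.n → Hei.{u} :=
    fun i => ⟨aa i, bb i, (T i - ((S.e : ℚ) * ((S.e : ℚ) - 1) / 2) * aa i * bb i) / S.e⟩ with hgg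
  have habc : ∀ (g : Fin S.n → Hei.{u}), S.IsSolution g →
      ∀ i, (g i).a = aa i ∧ (g i).b = bb i := by
    intro g hg i
    have h1 : Hei.πa ((g i) ^ S.e) = Monoid.Coprod.lift Hei.πa 1 (S.w i) := by
      rw [hg i]; exact eval_proj _ g (S.nullh i)
    have h2 : Hei.πb ((g i) ^ S.e) = Monoid.Coprod.lift Hei.πb 1 (S.w i) := by
      rw [hg i]; exact eval_proj _ g (S.nullh i)
    have h1' : (S.e : ℚ) * (g i).a = Ca i := by
      have := congrArg Multiplicative.toAdd h1
      rw [Hei.pow_coords] at this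
      exact this
    have h2' : (S.e : ℚ) * (g i).b = Cb i := by
      have := congrArg Multiplicative.toAdd h2
      rw [Hei.pow_coords] at this
      exact this
    constructor
    · show (g i).a = Ca i / S.e
      rw [← h1']; field_simp
    · show (g i).b = Cb i / S.e
      rw [← h2']; field_simp
  have hcc : ∀ (g : Fin S.n → Hei.{u}), S.IsSolution g →
      (∀ i, (g i).a = aa i ∧ (g i).b = bb i) → ∀ i,
      (g i).c = (T i - ((S.e : ℚ) * ((S.e : ℚ) - 1) / 2) * aa i * bb i) / S.e := by
    intro g hg hab i
    have hev : evalWord g (S.w i) = evalWord g₀ (S.w i) :=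
      eval_eq_of_proj_eq g₀ g (fun j => (hab j).1) (fun j => (hab j).2) (S.nullh i)
    have h3 : ((g i) ^ S.e).c = T i := by rw [hg i, hev]
    rw [Hei.pow_coords] at h3
    have h3' : (S.e : ℚ) * (g i).c
        + ((S.e : ℚ) * ((S.e : ℚ) - 1) / 2) * aa i * bb i = T i := by
      rw [← (hab i).1, ← (hab i).2]; exact h3
    field_simp
    linarith [h3']
  have hsol : S.IsSolution gg := by
    intro i
    have hev : evalWord gg (S.w i) = evalWord g₀ (S.w i) :=
      eval_eq_of_proj_eq g₀ gg (fun j => rfl) (fun j => rfl) (S.nullh i)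
    rw [hev, Hei.pow_coords]
    have hwa : (evalWord g₀ (S.w i)).a = Ca i := by
      have := congrArg Multiplicative.toAdd (eval_proj Hei.πa g₀ (S.nullh i))
      exact this
    have hwb : (evalWord g₀ (S.w i)).b = Cb i := by
      have := congrArg Multiplicative.toAdd (eval_proj Hei.πb g₀ (S.nullh i))
      exact this
    ext
    · show (S.e : ℚ) * (gg i).a = _
      rw [hwa]; show (S.e : ℚ) * (Ca i / S.e) = Ca i; field_simp
    · show (S.e : ℚ) * (gg i).b = _
      rw [hwb]; show (S.e : ℚ) * (Cb i / S.e) = Cb i; field_simp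
    · show (S.e : ℚ) * (gg i).c + ((S.e : ℚ) * ((S.e : ℚ) - 1) / 2) * (gg i).a * (gg i).b
        = (evalWord g₀ (S.w i)).c
      show (S.e : ℚ) * ((T i - ((S.e : ℚ) * ((S.e : ℚ) - 1) / 2) * aa i * bb i) / S.e)
        + ((S.e : ℚ) * ((S.e : ℚ) - 1) / 2) * aa i * bb i = T i
      field_simp
      ring
  refine ⟨gg, hsol, ?_⟩
  intro g' hg'
  funext i
  ext
  · exact (habc g' hg' i).1
  · exact (habc g' hg' i).2
  · exact hcc g' hg' (habc g' hg') i

end NotDivAux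


/-- Let `F̂` be the `ℚ`-closure of a free group `F` of rank `> 1` with distinct free generators
`x, y`, and let `C = F̂⁽¹⁾ = [F̂,F̂]`, so that `H₁(F̂;ℤ[H₁(F̂;ℚ)]) = C/[C,C]` with the conjugation
action of `ℤ[F̂/C]`.  Then the element `u` represented by `xyx⁻¹y⁻¹` is not of the form `s·v`
with `s = [x] - 1`; consequently the canonical map of `C/[C,C]` into its Ore localization
(equivalently, by divisibility, localization at all nonzero elements of the commutative group
ring) is not surjective. -/
theorem not_divisible_in_closure_of_free {α : Type u} (x y : α) (hxy : x ≠ y)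
    (Ahat : Type u) [Group Ahat] (c : FreeGroup α →* Ahat)
    (hc : IsRClosure (⊤ : Subring ℚ) c) :
    (∀ v : Abelianization ↥(⁅(⊤ : Subgroup Ahat), (⊤ : Subgroup Ahat)⁆),
      pAct ⁅(⊤ : Subgroup Ahat), ⊤⁆
          (Finsupp.single (QuotientGroup.mk (c (FreeGroup.of x))) 1 - Finsupp.single 1 1) v ≠
        Abelianization.of ⟨⁅c (FreeGroup.of x), c (FreeGroup.of y)⁆,
          Subgroup.commutator_mem_commutator (Subgroup.mem_top _) (Subgroup.mem_top _)⟩) ∧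
    ¬ ∀ (m : Abelianization ↥(⁅(⊤ : Subgroup Ahat), (⊤ : Subgroup Ahat)⁆))
        (p : (Ahat ⧸ ⁅(⊤ : Subgroup Ahat), (⊤ : Subgroup Ahat)⁆) →₀ ℤ), p ≠ 0 →
          ∃ v, pAct ⁅(⊤ : Subgroup Ahat), ⊤⁆ p v = m := by
  classical
  obtain ⟨hclosed, huniv⟩ := hc
  set X : NotDivAux.Hei.{u} := ⟨1, 0, 0⟩ with hX
  set Y : NotDivAux.Hei.{u} := ⟨0, 1, 0⟩ with hY
  set φ : FreeGroup α →* NotDivAux.Hei.{u} :=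
    FreeGroup.lift (fun z => if z = x then X else if z = y then Y else 1) with hφ
  obtain ⟨ψ, hψ, -⟩ := huniv _ _ NotDivAux.hei_closed φ
  have hψx : ψ (c (FreeGroup.of x)) = X := by
    have := DFunLike.congr_fun hψ (FreeGroup.of x)
    simpa [hφ] using this
  have hψy : ψ (c (FreeGroup.of y)) = Y := by
    have := DFunLike.congr_fun hψ (FreeGroup.of y)
    simpa [hφ, (Ne.symm hxy : y ≠ x)] using this
  have hker : ∀ m : Ahat, m ∈ ⁅(⊤ : Subgroup Ahat), (⊤ : Subgroup Ahat)⁆ →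
      (ψ m).a = 0 ∧ (ψ m).b = 0 := by
    intro m hm
    have hm' : m ∈ commutator Ahat := by rw [commutator_def]; exact hm
    have h1 : NotDivAux.Hei.πa.comp ψ m = 1 :=
      Abelianization.commutator_subset_ker (NotDivAux.Hei.πa.comp ψ) hm'
    have h2 : NotDivAux.Hei.πb.comp ψ m = 1 :=
      Abelianization.commutator_subset_ker (NotDivAux.Hei.πb.comp ψ) hm'
    exact ⟨congrArg Multiplicative.toAdd h1, congrArg Multiplicative.toAdd h2⟩
  set ρ : ↥(⁅(⊤ : Subgroup Ahat), (⊤ : Subgroup Ahat)⁆) →* Multiplicative ℚ :=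
    { toFun := fun m => Multiplicative.ofAdd ((ψ m.1).c)
      map_one' := by simp
      map_mul' := fun m₁ m₂ => by
        have h1 := (hker m₁.1 m₁.2).1
        show Multiplicative.ofAdd ((ψ (m₁.1 * m₂.1)).c) = _
        rw [map_mul]
        show Multiplicative.ofAdd ((ψ m₁.1).c + (ψ m₂.1).c + (ψ m₁.1).a * (ψ m₂.1).b) = _
        rw [h1, zero_mul, add_zero]
        rfl } with hρ
  set Φ : Abelianization ↥(⁅(⊤ : Subgroup Ahat), (⊤ : Subgroup Ahat)⁆) →* Multiplicative ℚ :=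
    Abelianization.lift ρ with hΦ
  have hconj : ∀ (g : Ahat) (v : Abelianization ↥(⁅(⊤ : Subgroup Ahat), (⊤ : Subgroup Ahat)⁆)),
      Φ (conjAbel ⁅(⊤ : Subgroup Ahat), ⊤⁆ g v) = Φ v := by
    intro g v
    have key : Φ.comp (conjAbel ⁅(⊤ : Subgroup Ahat), ⊤⁆ g) = Φ := by
      apply Abelianization.hom_ext
      apply MonoidHom.ext; intro m
      show Φ (conjAbel ⁅(⊤ : Subgroup Ahat), ⊤⁆ g (Abelianization.of m)) = Φ (Abelianization.of m)
      rw [conjAbel, Abelianization.map_of, hΦ, Abelianization.lift_apply_of, Abelianization.lift_apply_of]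
      show Multiplicative.ofAdd ((ψ ((MulAut.conjNormal g).toMonoidHom m).1).c)
        = Multiplicative.ofAdd ((ψ m.1).c)
      have hval : ((MulAut.conjNormal g).toMonoidHom m).1 = g * m.1 * g⁻¹ :=
        MulAut.conjNormal_apply g m
      rw [hval, map_mul, map_mul, map_inv]
      rw [← NotDivAux.Hei.central (hker m.1 m.2).1 (hker m.1 m.2).2 (ψ g), mul_inv_cancel_right]
    exact DFunLike.congr_fun key v
  have hpact : ∀ (p : (Ahat ⧸ ⁅(⊤ : Subgroup Ahat), (⊤ : Subgroup Ahat)⁆) →₀ ℤ)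
      (v : Abelianization ↥(⁅(⊤ : Subgroup Ahat), (⊤ : Subgroup Ahat)⁆)),
      Φ (pAct ⁅(⊤ : Subgroup Ahat), ⊤⁆ p v) = (Φ v) ^ (p.sum fun _ z => z) := by
    intro p v
    rw [pAct, map_finsuppProd]
    have : (p.prod fun a b => Φ ((conjAbel ⁅(⊤ : Subgroup Ahat), ⊤⁆ a.out v) ^ b))
        = ∏ a ∈ p.support, (Φ v) ^ (p a) :=
      Finset.prod_congr rfl (fun a _ => by
        show Φ ((conjAbel ⁅(⊤ : Subgroup Ahat), ⊤⁆ a.out v) ^ (p a)) = Φ v ^ p a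
        rw [map_zpow, hconj])
    rw [this, NotDivAux.prod_zpow_eq]
    rfl
  have hu : Φ (Abelianization.of ⟨⁅c (FreeGroup.of x), c (FreeGroup.of y)⁆,
      Subgroup.commutator_mem_commutator (Subgroup.mem_top _) (Subgroup.mem_top _)⟩)
      = Multiplicative.ofAdd (1 : ℚ) := by
    show Multiplicative.ofAdd ((ψ ⁅c (FreeGroup.of x), c (FreeGroup.of y)⁆).c) = _
    rw [map_commutatorElement, hψx, hψy]
    norm_num [commutatorElement_def, hX, hY]
  have key1 : ∀ v : Abelianization ↥(⁅(⊤ : Subgroup Ahat), (⊤ : Subgroup Ahat)⁆),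
      pAct ⁅(⊤ : Subgroup Ahat), ⊤⁆
          (Finsupp.single (QuotientGroup.mk (c (FreeGroup.of x))) 1 - Finsupp.single 1 1) v ≠
        Abelianization.of ⟨⁅c (FreeGroup.of x), c (FreeGroup.of y)⁆,
          Subgroup.commutator_mem_commutator (Subgroup.mem_top _) (Subgroup.mem_top _)⟩ := by
    intro v hv
    have hΦv := congrArg Φ hv
    rw [hpact, hu] at hΦv
    have hsum : ((Finsupp.single (QuotientGroup.mk (c (FreeGroup.of x)) :
        Ahat ⧸ ⁅(⊤ : Subgroup Ahat), (⊤ : Subgroup Ahat)⁆) (1 : ℤ)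
        - Finsupp.single 1 1).sum fun _ z => z) = 0 := by
      rw [Finsupp.sum_sub_index (fun _ _ _ => rfl),
        Finsupp.sum_single_index rfl, Finsupp.sum_single_index rfl, sub_self]
    rw [hsum, zpow_zero] at hΦv
    have : (0 : ℚ) = 1 := congrArg Multiplicative.toAdd hΦv
    norm_num at this
  refine ⟨key1, fun hall => ?_⟩
  have hA0 : (QuotientGroup.mk (c (FreeGroup.of x)) :
      Ahat ⧸ ⁅(⊤ : Subgroup Ahat), (⊤ : Subgroup Ahat)⁆) ≠ 1 := by
    intro h
    have hmem : c (FreeGroup.of x) ∈ ⁅(⊤ : Subgroup Ahat), (⊤ : Subgroup Ahat)⁆ :=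
      (QuotientGroup.eq_one_iff _).mp h
    have h0 := (hker _ hmem).1
    rw [hψx] at h0
    norm_num [hX] at h0
  have hs : (Finsupp.single (QuotientGroup.mk (c (FreeGroup.of x)) :
      Ahat ⧸ ⁅(⊤ : Subgroup Ahat), (⊤ : Subgroup Ahat)⁆) (1 : ℤ) - Finsupp.single 1 1) ≠ 0 := by
    intro h
    have := DFunLike.congr_fun h (QuotientGroup.mk (c (FreeGroup.of x)) :
      Ahat ⧸ ⁅(⊤ : Subgroup Ahat), (⊤ : Subgroup Ahat)⁆)
    simp [Finsupp.single_apply, hA0, (Ne.symm hA0 : (1 : Ahat ⧸ _) ≠ _)] at this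
  obtain ⟨v, hv⟩ := hall
    (Abelianization.of ⟨⁅c (FreeGroup.of x), c (FreeGroup.of y)⁆,
      Subgroup.commutator_mem_commutator (Subgroup.mem_top _) (Subgroup.mem_top _)⟩) _ hs
  exact key1 v hv
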